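/- Let Σ, Γ be finite types with decidable equality and let f : List Σ → List Γ be a regular function (in the padded-convolution sense). Then there exist a constant c : ℕ and a length-preserving regular function g : List (Option Σ) → List (Option Γ) such that for every w : List Σ, (f w).length ≤ w.length + c and g (w.map some ++ List.replicate c none) = (f w).map some ++ List.replicate (w.length + c - (f w).length) none. -/

import Mathlib

/-- `tuplefy w v` combines two words in parallel into a word of pairs of length
`max w.length v.length`, padding missing entries with `none`. -/
def tuplefy {A G : Type*} (w : List A) (v : List G) : List (Option A × Option G) :=
  (List.range (max w.length v.length)).map fun i => (w[i]?, v[i]?)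


section Helpers
variable {A G β γ : Type*}

lemma pad_getElem? (w : List β) (k i : ℕ) :
    (w.map some ++ List.replicate k none)[i]? =
      if i < w.length + k then some w[i]? else none := by
  rcases lt_or_ge i w.length with h | h
  · rw [List.getElem?_append_left (by simpa using h)]
    simp [List.getElem?_eq_getElem (by simpa using h), h, List.getElem?_eq_getElem (l := w) h]
    omega
  · rw [List.getElem?_append_right (by simpa using h)]
    rcases lt_or_ge i (w.length + k) with h2 | h2
    · rw [if_pos h2, List.getElem?_replicate]
      simp only [List.length_map]
      rw [if_pos (by omega), List.getElem?_eq_none h]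
    · rw [if_neg (by omega), List.getElem?_eq_none (by simp; omega)]

lemma tuplefy_length (w : List A) (v : List G) :
    (tuplefy w v).length = max w.length v.length := by simp [tuplefy]

lemma tuplefy_getElem? (w : List A) (v : List G) (i : ℕ) :
    (tuplefy w v)[i]? =
      if i < max w.length v.length then some (w[i]?, v[i]?) else none := by
  rcases lt_or_ge i (max w.length v.length) with h | h
  · rw [tuplefy]
    rw [List.getElem?_map, List.getElem?_range h]
    simp [h]
  · rw [if_neg (by omega), List.getElem?_eq_none (by simpa [tuplefy_length] using h)]

lemma map_fst_tuplefy (w : List A) (v : List G) :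
    (tuplefy w v).map Prod.fst =
      w.map some ++ List.replicate (max w.length v.length - w.length) none := by
  apply List.ext_getElem?
  intro i
  rw [List.getElem?_map, tuplefy_getElem?, pad_getElem?]
  rcases lt_or_ge i (max w.length v.length) with h | h
  · simp [if_pos h, if_pos (show i < w.length + (max w.length v.length - w.length) by omega)]
  · simp [if_neg (not_lt.2 h), if_neg (show ¬ i < w.length + (max w.length v.length - w.length) by omega)]

lemma map_snd_tuplefy (w : List A) (v : List G) :
    (tuplefy w v).map Prod.snd =
      v.map some ++ List.replicate (max w.length v.length - v.length) none := by
  apply List.ext_getElem?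
  intro i
  rw [List.getElem?_map, tuplefy_getElem?, pad_getElem?]
  rcases lt_or_ge i (max w.length v.length) with h | h
  · simp [if_pos h, if_pos (show i < v.length + (max w.length v.length - v.length) by omega)]
  · simp [if_neg (not_lt.2 h), if_neg (show ¬ i < v.length + (max w.length v.length - v.length) by omega)]

lemma reduceOption_map_some (w : List β) : (w.map some).reduceOption = w := by
  induction w with
  | nil => rfl
  | cons a t ih => simp [List.reduceOption_cons_of_some, ih]

lemma pad_reduceOption (w : List β) (k : ℕ) :
    (w.map some ++ List.replicate k none).reduceOption = w := by
  rw [List.reduceOption_append, reduceOption_map_some]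
  suffices h : (List.replicate k (none : Option β)).reduceOption = [] by simp [h]
  induction k with
  | zero => rfl
  | succ n ih => simpa [List.replicate_succ, List.reduceOption_cons_of_none] using ih

lemma pad_inj {w w' : List β} {a b : ℕ}
    (h : w.map some ++ List.replicate a none = w'.map some ++ List.replicate b none) :
    w = w' ∧ a = b := by
  have hw : w = w' := by
    have := congrArg List.reduceOption h
    rwa [pad_reduceOption, pad_reduceOption] at this
  subst hw
  have := congrArg List.length h
  simp at this
  exact ⟨rfl, this⟩

lemma pair_ext {u u' : List (β × γ)} (h1 : u.map Prod.fst = u'.map Prod.fst)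
    (h2 : u.map Prod.snd = u'.map Prod.snd) : u = u' := by
  induction u generalizing u' with
  | nil => cases u' <;> simp_all
  | cons p t ih =>
    cases u' with
    | nil => simp_all
    | cons q t' =>
      simp only [List.map_cons, List.cons.injEq] at h1 h2
      rw [ih h1.2 h2.2, Prod.ext h1.1 h2.1]

end Helpers
open List in
section
variable {A G β : Type*} {α σ : Type*}

lemma pad_snoc (v : List (Option β)) (a : Option β) (k : ℕ) :
    (∃ w : List β, v ++ [a] = w.map some ++ List.replicate k none) ↔
      ((∃ x, a = some x) ∧ k = 0 ∧ ∃ w : List β, v = w.map some) ∨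
      (a = none ∧ ∃ j, k = j + 1 ∧ ∃ w : List β, v = w.map some ++ List.replicate j none) := by
  constructor
  · rintro ⟨w, h⟩
    cases k with
    | zero =>
      left
      simp only [List.replicate, List.append_nil] at h
      have ha : a ∈ w.map some := h ▸ List.mem_append.2 (Or.inr (List.mem_singleton_self a))
      obtain ⟨x, _, hx⟩ := List.mem_map.1 ha
      refine ⟨⟨x, hx.symm⟩, rfl, w.take v.length, ?_⟩
      have := congrArg (List.take v.length) h
      rwa [List.take_left, ← List.map_take] at this
    | succ j =>
      right
      rw [List.replicate_succ', ← List.append_assoc] at h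
      obtain ⟨h1, h2⟩ := List.append_inj' h (by simp)
      simp only [List.cons.injEq] at h2
      exact ⟨h2.1, j, rfl, w, h1⟩
  · rintro (⟨⟨x, rfl⟩, rfl, w, rfl⟩ | ⟨rfl, j, rfl, w, rfl⟩)
    · exact ⟨w ++ [x], by simp⟩
    · exact ⟨w, by rw [List.replicate_succ', List.append_assoc]⟩

lemma padlang_snoc (M : DFA α σ) (u : List α) (a pad : α) :
    (∃ x m, x ∈ M.accepts ∧ u ++ [a] = x ++ List.replicate m pad) ↔
      ((∃ x m, x ∈ M.accepts ∧ u = x ++ List.replicate m pad) ∧ a = pad) ∨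
        (u ++ [a]) ∈ M.accepts := by
  constructor
  · rintro ⟨x, m, hx, h⟩
    cases m with
    | zero => right; simp only [List.replicate, List.append_nil] at h; exact h ▸ hx
    | succ j =>
      left
      rw [List.replicate_succ', ← List.append_assoc] at h
      obtain ⟨h1, h2⟩ := List.append_inj' h (by simp)
      simp only [List.cons.injEq] at h2
      exact ⟨⟨x, j, hx, h1⟩, h2.1⟩
  · rintro (⟨⟨x, m, hx, rfl⟩, rfl⟩ | h)
    · exact ⟨x, m + 1, hx, by rw [List.replicate_succ', List.append_assoc]⟩
    · exact ⟨u ++ [a], 0, h, by simp⟩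

end

section Bound
variable {A G : Type*} {σ : Type} [Fintype σ]

lemma length_bound (f : List A → List G) (M : DFA (Option A × Option G) σ)
    (hM : M.accepts = { u : List (Option A × Option G) | ∃ w : List A, tuplefy w (f w) = u })
    (w : List A) : (f w).length ≤ w.length + Fintype.card σ := by
  by_contra hcon
  push_neg at hcon
  set κ := Fintype.card σ with hκ
  set u := tuplefy w (f w) with hu
  have hwle : w.length ≤ (f w).length := by omega
  have hmax : max w.length (f w).length = (f w).length := max_eq_right hwle
  have hulen : u.length = (f w).length := by rw [hu, tuplefy_length, hmax]
  have hacc : u ∈ M.accepts := by rw [hM]; exact ⟨w, rfl⟩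
  set p := u.take w.length with hp
  set x := u.drop w.length with hx
  have hpx : p ++ x = u := List.take_append_drop _ _
  have hxlen : x.length = (f w).length - w.length := by
    rw [hx, List.length_drop, hulen]
  have hlen : κ ≤ x.length := by omega
  have hevalu : M.evalFrom (M.evalFrom M.start p) x ∈ M.accept := by
    rw [← DFA.evalFrom_of_append, hpx]
    exact hacc
  obtain ⟨q, a, b, c', hsplit, -, hbne, ha, hb, hc⟩ :=
    M.evalFrom_split (s := M.evalFrom M.start p) hlen rfl
  -- the pumped word
  set u' := p ++ (a ++ (b ++ (b ++ c'))) with hu'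
  have hacc' : u' ∈ M.accepts := by
    show M.evalFrom M.start u' ∈ M.accept
    rw [hu', DFA.evalFrom_of_append, DFA.evalFrom_of_append, DFA.evalFrom_of_append,
      DFA.evalFrom_of_append, ha, hb, hb, hc]
    exact hevalu
  rw [hM] at hacc'
  obtain ⟨w', hw'⟩ := hacc'
  -- fst projection of u
  have hufst : u.map Prod.fst =
      w.map some ++ List.replicate ((f w).length - w.length) none := by
    rw [hu, map_fst_tuplefy, hmax]
  have hpfst : p.map Prod.fst = w.map some := by
    rw [hp, List.map_take, hufst, List.take_left' (by simp)]
  have hxfst : x.map Prod.fst = List.replicate ((f w).length - w.length) none := by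
    rw [hx, List.map_drop, hufst, List.drop_left' (by simp)]
  have hxnone : ∀ z ∈ x, z.1 = none := by
    intro z hz
    have : z.1 ∈ x.map Prod.fst := List.mem_map_of_mem hz
    rw [hxfst] at this
    exact List.eq_of_mem_replicate this
  have habc : ∀ z ∈ a ++ (b ++ (b ++ c')), z.1 = none := by
    intro z hz
    apply hxnone
    rw [hsplit]
    simp only [List.mem_append] at hz ⊢
    tauto
  have hufst' : u'.map Prod.fst =
      w.map some ++ List.replicate (a ++ (b ++ (b ++ c'))).length none := by
    rw [hu', List.map_append, hpfst]
    congr 1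
    rw [show (a ++ (b ++ (b ++ c'))).length = ((a ++ (b ++ (b ++ c'))).map Prod.fst).length by simp]
    apply List.eq_replicate_of_mem
    intro z hz
    obtain ⟨z', hz', rfl⟩ := List.mem_map.1 hz
    exact habc z' hz'
  -- but u' = tuplefy w' (f w'), so its fst projection is also in canonical form
  have hcanon : u'.map Prod.fst = w'.map some ++
      List.replicate (max w'.length (f w').length - w'.length) none := by
    rw [← hw', map_fst_tuplefy]
  have hww : w' = w := (pad_inj (hcanon.symm.trans hufst')).1
  -- length contradiction
  have : u' = u := by rw [← hw', hww, ← hu]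
  have hlen1 : u'.length = u.length + b.length := by
    have : x.length = a.length + b.length + c'.length := by rw [hsplit]; simp; omega
    have hul : u.length = p.length + x.length := by rw [← hpx]; simp
    simp only [hu', List.length_append]
    omega
  have hbpos : 0 < b.length := List.length_pos_iff.2 hbne
  rw [this] at hlen1
  omega

end Bound
section PadDFA
variable {A G : Type*} {σ : Type}

def padDFA (M : DFA (Option A × Option G) σ) (c : ℕ) :
    DFA (Option A × Option G) (σ × Prop × Option (Fin (c + 1)) × Prop) where
  step := fun st a =>
    (M.step st.1 a,
     (st.2.1 ∧ a = (none, none)) ∨ M.step st.1 a ∈ M.accept,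
     (match st.2.2.1, a.1 with
      | none, _ => none
      | some k, some _ => if (k : ℕ) = 0 then some k else none
      | some k, none =>
          if h : (k : ℕ) + 1 ≤ c then some ⟨(k : ℕ) + 1, by omega⟩ else none),
     (st.2.2.2 ∧ a.2 = none))
  start := (M.start, M.start ∈ M.accept, some ⟨0, Nat.succ_pos c⟩, True)
  accept := { st | (st.2.2.1 = some (Fin.last c) ∧ st.2.1) ∨
      (st.2.2.1 ≠ some (Fin.last c) ∧ st.2.2.2) }

lemma padDFA_eval (M : DFA (Option A × Option G) σ) (c : ℕ)
    (u : List (Option A × Option G)) :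
    ((padDFA M c).eval u).1 = M.eval u ∧
    (((padDFA M c).eval u).2.1 ↔
      ∃ x m, x ∈ M.accepts ∧ u = x ++ List.replicate m ((none : Option A), (none : Option G))) ∧
    (∀ k : Fin (c + 1), (((padDFA M c).eval u).2.2.1 = some k ↔
      ∃ w : List A, u.map Prod.fst = w.map some ++ List.replicate (k : ℕ) none)) ∧
    (((padDFA M c).eval u).2.2.2 ↔ ∀ p ∈ u, p.2 = none) := by
  induction u using List.reverseRecOn with
  | nil =>
    refine ⟨rfl, ?_, ?_, by simp [padDFA, DFA.eval_nil]⟩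
    · show (M.start ∈ M.accept) ↔ _
      constructor
      · intro h; exact ⟨[], 0, h, by simp⟩
      · rintro ⟨x, m, hx, hxm⟩
        obtain ⟨rfl, -⟩ := List.append_eq_nil_iff.1 hxm.symm
        exact hx
    · intro k
      show some (⟨0, Nat.succ_pos c⟩ : Fin (c + 1)) = some k ↔ _
      constructor
      · intro h
        obtain rfl : (⟨0, Nat.succ_pos c⟩ : Fin (c + 1)) = k := Option.some_injective _ h
        exact ⟨[], by simp⟩
      · rintro ⟨w, hw⟩
        simp only [List.map_nil, List.nil_eq, List.append_eq_nil_iff, List.map_eq_nil_iff,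
          List.replicate_eq_nil_iff] at hw
        congr 1
        exact Fin.ext (by simp [hw.2])
  | append_singleton u a ih =>
    obtain ⟨ihA, ihB, ihC, ihD⟩ := ih
    set st := (padDFA M c).eval u with hst
    have hstep : (padDFA M c).eval (u ++ [a]) = (padDFA M c).step st a :=
      DFA.eval_append_singleton _ _ _
    have hfst : ((padDFA M c).step st a).1 = M.step st.1 a := rfl
    refine ⟨?_, ?_, ?_, ?_⟩
    · rw [hstep, hfst, ihA, DFA.eval_append_singleton]
    · rw [hstep]
      show ((st.2.1 ∧ a = (none, none)) ∨ M.step st.1 a ∈ M.accept) ↔ _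
      rw [padlang_snoc M u a ((none : Option A), (none : Option G))]
      have : M.step st.1 a ∈ M.accept ↔ (u ++ [a]) ∈ M.accepts := by
        rw [ihA, DFA.mem_accepts, DFA.eval_append_singleton]
      rw [this, ihB]
    · intro k
      rw [hstep]
      have hmap : (u ++ [a]).map Prod.fst = u.map Prod.fst ++ [a.1] := by simp
      rw [hmap, pad_snoc]
      show (match st.2.2.1, a.1 with
      | none, _ => none
      | some k, some _ => if (k : ℕ) = 0 then some k else none
      | some k, none =>
          if h : (k : ℕ) + 1 ≤ c then some ⟨(k : ℕ) + 1, by omega⟩ else none) = some k ↔ _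
      rcases hshape : st.2.2.1 with _ | k0
      · show (none : Option (Fin (c + 1))) = some k ↔ _
        constructor
        · intro h; exact absurd h (by simp)
        · rintro (⟨-, -, w, hw⟩ | ⟨-, j, hk, w, hw⟩)
          · exact absurd ((ihC ⟨0, Nat.succ_pos c⟩).2 ⟨w, by simpa using hw⟩)
              (by rw [hshape]; simp)
          · have hjc : j < c + 1 := by have := k.isLt; omega
            exact absurd ((ihC ⟨j, hjc⟩).2 ⟨w, hw⟩) (by rw [hshape]; simp)
      · have hk0 : ∃ w : List A, u.map Prod.fst = w.map some ++ List.replicate (k0 : ℕ) none :=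
          (ihC k0).1 hshape
        obtain ⟨a1, a2⟩ := a
        rcases a1 with _ | x
        · -- a.1 = none
          show (if h : (k0 : ℕ) + 1 ≤ c then
              some (⟨(k0 : ℕ) + 1, by omega⟩ : Fin (c + 1)) else none) = some k ↔ _
          by_cases hlt : (k0 : ℕ) + 1 ≤ c
          · rw [dif_pos hlt]
            constructor
            · intro h
              obtain rfl : (⟨(k0 : ℕ) + 1, by omega⟩ : Fin (c + 1)) = k :=
                Option.some_injective _ h
              exact Or.inr ⟨rfl, (k0 : ℕ), rfl, hk0⟩
            · rintro (⟨⟨x, hx⟩, -, -⟩ | ⟨-, j, hk, w, hw⟩)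
              · exact absurd hx (by simp)
              · congr 1
                apply Fin.ext
                have hjc : j < c + 1 := by have := k.isLt; omega
                have h1 := (ihC ⟨j, hjc⟩).2 ⟨w, hw⟩
                rw [hshape] at h1
                have h2 : k0 = ⟨j, hjc⟩ := Option.some_injective _ h1
                simp [hk, h2]
          · rw [dif_neg hlt]
            constructor
            · intro h; exact absurd h (by simp)
            · rintro (⟨⟨x, hx⟩, -, -⟩ | ⟨-, j, hk, w, hw⟩)
              · exact absurd hx (by simp)
              · exfalso
                have hjc : j < c + 1 := by have := k.isLt; omega
                have h1 := (ihC ⟨j, hjc⟩).2 ⟨w, hw⟩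
                rw [hshape] at h1
                have h2 : k0 = ⟨j, hjc⟩ := Option.some_injective _ h1
                have h3 : (k0 : ℕ) = j := by rw [h2]
                have := k.isLt
                omega
        · -- a.1 = some x
          show (if (k0 : ℕ) = 0 then some k0 else none) = some k ↔ _
          by_cases hk00 : (k0 : ℕ) = 0
          · rw [if_pos hk00]
            constructor
            · intro h
              obtain rfl : k0 = k := Option.some_injective _ h
              obtain ⟨w, hw⟩ := hk0
              refine Or.inl ⟨⟨x, rfl⟩, hk00, w, ?_⟩
              simpa [hk00] using hw
            · rintro (⟨-, hk, w, hw⟩ | ⟨ha, -⟩)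
              · congr 1
                exact Fin.ext (by simp [hk00, hk])
              · exact absurd ha (by simp)
          · rw [if_neg hk00]
            constructor
            · intro h; exact absurd h (by simp)
            · rintro (⟨-, hk, w, hw⟩ | ⟨ha, -⟩)
              · exfalso
                have h1 := (ihC ⟨0, Nat.succ_pos c⟩).2 ⟨w, by simpa using hw⟩
                rw [hshape] at h1
                have h2 : k0 = ⟨0, Nat.succ_pos c⟩ := Option.some_injective _ h1
                exact hk00 (by rw [h2])
              · exact absurd ha (by simp)
    · rw [hstep]
      show (st.2.2.2 ∧ a.2 = none) ↔ _
      rw [ihD]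
      constructor
      · rintro ⟨h1, h2⟩ p hp
        rcases List.mem_append.1 hp with h | h
        · exact h1 p h
        · rw [List.mem_singleton.1 h]; exact h2
      · intro h
        exact ⟨fun p hp => h p (List.mem_append.2 (Or.inl hp)), h a (by simp)⟩

end PadDFA

section Assemble
variable {A G : Type*} {σ : Type}

open Classical in
noncomputable def gAux (f : List A → List G) (c : ℕ) (v : List (Option A)) :
    List (Option G) :=
  if h : ∃ w : List A, v = w.map some ++ List.replicate c none then
    (f h.choose).map some ++ List.replicate (v.length - (f h.choose).length) none
  else List.replicate v.length none

lemma padDFA_accepts (f : List A → List G) (M : DFA (Option A × Option G) σ) (c : ℕ)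
    (hM : M.accepts = { u : List (Option A × Option G) | ∃ w : List A, tuplefy w (f w) = u })
    (hbound : ∀ w : List A, (f w).length ≤ w.length + c) :
    (padDFA M c).accepts =
      { u : List (Option A × Option G) | u.map Prod.snd = gAux f c (u.map Prod.fst) } := by
  ext u
  rw [DFA.mem_accepts]
  obtain ⟨hA, hB, hC, hD⟩ := padDFA_eval M c u
  have hacc : (padDFA M c).eval u ∈ (padDFA M c).accept ↔
      ((((padDFA M c).eval u).2.2.1 = some (Fin.last c) ∧ ((padDFA M c).eval u).2.1) ∨
       (((padDFA M c).eval u).2.2.1 ≠ some (Fin.last c) ∧ ((padDFA M c).eval u).2.2.2)) :=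
    Iff.rfl
  rw [hacc]
  by_cases h : ∃ w : List A, u.map Prod.fst = w.map some ++ List.replicate c none
  · have hch := h.choose_spec
    set w := h.choose with hwdef
    have hsome : ((padDFA M c).eval u).2.2.1 = some (Fin.last c) :=
      (hC (Fin.last c)).2 ⟨w, by simpa [Fin.val_last] using hch⟩
    have hulen : u.length = w.length + c := by
      have := congrArg List.length hch
      simpa using this
    have hfb : (f w).length ≤ w.length + c := hbound w
    have hgood : ((padDFA M c).eval u).2.1 ↔
        u.map Prod.snd = (f w).map some ++
          List.replicate (u.length - (f w).length) none := by
      rw [hB]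
      constructor
      · rintro ⟨x, m, hx, rfl⟩
        rw [hM] at hx
        obtain ⟨w', hx⟩ := hx
        subst hx
        have hfst : (tuplefy w' (f w') ++
            List.replicate m ((none : Option A), (none : Option G))).map Prod.fst =
            w'.map some ++
              List.replicate (max w'.length (f w').length - w'.length + m) none := by
          rw [List.map_append, map_fst_tuplefy, List.map_replicate, List.append_assoc,
            ← List.replicate_add]
        obtain ⟨hww, -⟩ := pad_inj (hfst.symm.trans hch)
        rw [List.map_append, map_snd_tuplefy, List.map_replicate, List.append_assoc,
          ← List.replicate_add, hww]
        congr 2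
        rw [List.length_append, tuplefy_length, List.length_replicate]
        have := le_max_right w.length (f w).length
        omega
      · intro hsnd
        have hLle : max w.length (f w).length ≤ u.length := by
          rw [hulen]
          exact max_le (by omega) (by omega)
        refine ⟨tuplefy w (f w), u.length - max w.length (f w).length,
          by rw [hM]; exact ⟨w, rfl⟩, ?_⟩
        apply pair_ext
        · rw [List.map_append, map_fst_tuplefy, List.map_replicate, List.append_assoc,
            ← List.replicate_add, hch]
          congr 2
          have := le_max_left w.length (f w).length
          omega
        · rw [List.map_append, map_snd_tuplefy, List.map_replicate, List.append_assoc,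
            ← List.replicate_add, hsnd]
          congr 2
          have := le_max_right w.length (f w).length
          omega
    have hg : gAux f c (u.map Prod.fst) =
        (f w).map some ++ List.replicate (u.length - (f w).length) none := by
      rw [gAux, dif_pos h]
      simp only [← hwdef, List.length_map]
    show _ ↔ List.map Prod.snd u = gAux f c (List.map Prod.fst u)
    rw [hg, ← hgood]
    constructor
    · rintro (⟨-, hb⟩ | ⟨hne, -⟩)
      · exact hb
      · exact absurd hsome hne
    · intro hb
      exact Or.inl ⟨hsome, hb⟩
  · have hne : ((padDFA M c).eval u).2.2.1 ≠ some (Fin.last c) := by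
      intro hcon
      obtain ⟨w, hw⟩ := (hC (Fin.last c)).1 hcon
      exact h ⟨w, by simpa [Fin.val_last] using hw⟩
    have hg : gAux f c (u.map Prod.fst) = List.replicate u.length none := by
      rw [gAux, dif_neg h, List.length_map]
    have hiff : u.map Prod.snd = List.replicate u.length none ↔ ∀ p ∈ u, p.2 = none := by
      constructor
      · intro hrep p hp
        have hm : p.2 ∈ u.map Prod.snd := List.mem_map_of_mem hp
        rw [hrep] at hm
        exact List.eq_of_mem_replicate hm
      · intro hall
        rw [show u.length = (u.map Prod.snd).length by simp]
        apply List.eq_replicate_of_mem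
        intro b hb
        obtain ⟨p, hp, rfl⟩ := List.mem_map.1 hb
        exact hall p hp
    show _ ↔ List.map Prod.snd u = gAux f c (List.map Prod.fst u)
    rw [hg, hiff]
    constructor
    · rintro (⟨hs, -⟩ | ⟨-, hd⟩)
      · exact absurd hs hne
      · exact hD.1 hd
    · intro hs
      exact Or.inr ⟨hne, hD.2 hs⟩

end Assemble

/-- Every regular function (in the padded-convolution sense) is, up to
padding with a fixed number of dummy characters, a length-preserving regular
function. -/
theorem regular_reduces_to_lengthPreserving {A G : Type*}
    [Fintype A] [DecidableEq A] [Fintype G] [DecidableEq G]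
    (f : List A → List G)
    (hreg : ∃ (σ : Type) (_ : Fintype σ) (M : DFA (Option A × Option G) σ),
      M.accepts = { u : List (Option A × Option G) | ∃ w : List A, tuplefy w (f w) = u }) :
    ∃ (c : ℕ) (g : List (Option A) → List (Option G)),
      (∀ v : List (Option A), (g v).length = v.length) ∧
      (∃ (σ : Type) (_ : Fintype σ) (M : DFA (Option A × Option G) σ),
        M.accepts = { u : List (Option A × Option G) |
          u.map Prod.snd = g (u.map Prod.fst) }) ∧
      ∀ w : List A,
        (f w).length ≤ w.length + c ∧
        g (w.map some ++ List.replicate c none) =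
          (f w).map some ++ List.replicate (w.length + c - (f w).length) none := by
  obtain ⟨σ, instσ, M, hM⟩ := hreg
  set c := Fintype.card σ with hc
  have hbound : ∀ w : List A, (f w).length ≤ w.length + c := length_bound f M hM
  refine ⟨c, gAux f c, ?_, ?_, ?_⟩
  · intro v
    rw [gAux]
    split_ifs with h
    · have hch := h.choose_spec
      have hvlen : v.length = h.choose.length + c := by
        have := congrArg List.length hch
        simpa using this
      have := hbound h.choose
      simp only [List.length_append, List.length_map, List.length_replicate]
      omega
    · simp
  · exact ⟨σ × Prop × Option (Fin (c + 1)) × Prop, inferInstance, padDFA M c,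
      padDFA_accepts f M c hM hbound⟩
  · intro w
    refine ⟨hbound w, ?_⟩
    have h : ∃ w' : List A,
        w.map some ++ List.replicate c none = w'.map some ++ List.replicate c none :=
      ⟨w, rfl⟩
    rw [gAux, dif_pos h]
    obtain ⟨hww, -⟩ := pad_inj h.choose_spec.symm
    rw [hww]
    congr 1
    congr 1
    simp
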